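/- Let π = p⊗Q with p∈Δ(K) and Q∈Δ(L)^K, let x∈∂^+v_θ(·,Q)(p) where v_θ(p',Q) := v_θ(p'⊗Q) denotes the value of the repeated game 𝒢_θ(p'⊗Q) (extended by −∞ outside Δ(K)), let ε≥0, and let t̂_ε be a strategy of player 2 that is ε-optimal in the dual game 𝒟[𝒢_θ](x,Q;𝟏), i.e. sup_{(p',ŝ)} h_θ[x,Q;𝟏](p',ŝ,t̂_ε) ≤ w^+_θ(x,Q;𝟏) + ε. Then t̂_ε is ε-optimal for player 2 in 𝒢_θ(π): sup_{ŝ} γ_θ(π,ŝ,t̂_ε) ≤ v_θ(π) + ε. -/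

import Mathlib

open scoped BigOperators

noncomputable section RepeatedGames

/-- Probability of a finite history (list of action pairs, in chronological
order) under behavioral strategies `s`, `t` (which map the list of past action
pairs to a mixed action). -/
def probH {I J : Type*} (s : List (I × J) → I → ℝ) (t : List (I × J) → J → ℝ) :
    List (I × J) → ℝ
  | [] => 1
  | a :: h =>
      s [] a.1 * t [] a.2 *
        probH (fun h' => s (a :: h')) (fun h' => t (a :: h')) h

/-- Expected stage payoff at stage `m+1` (i.e. after `m` completed stages). -/
def stagePay {I J : Type*} [Fintype I] [Fintype J]
    (s : List (I × J) → I → ℝ) (t : List (I × J) → J → ℝ)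
    (g : I → J → ℝ) (m : ℕ) : ℝ :=
  ∑ h : Fin m → I × J,
    probH s t (List.ofFn h) *
      ∑ i, ∑ j, s (List.ofFn h) i * t (List.ofFn h) j * g i j

/-- Behavioral strategies of a player with type set `X` and action set `A`,
observing histories in `(I × J)^*`. -/
def Strat (I J X A : Type*) [Fintype A] : Type _ :=
  {f : X → List (I × J) → A → ℝ // ∀ x h, f x h ∈ stdSimplex ℝ A}

instance {I J X A : Type*} [Fintype A] [Nonempty A] :
    Nonempty (Strat I J X A) := by
  refine ⟨⟨fun _ _ _ => (Fintype.card A : ℝ)⁻¹, fun x h => ⟨fun a => by positivity, ?_⟩⟩⟩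
  have hA : (Fintype.card A : ℝ) ≠ 0 := by
    exact_mod_cast Fintype.card_ne_zero
  simp [Finset.sum_const, Finset.card_univ, nsmul_eq_mul, mul_inv_cancel₀ hA]

/-- The auxiliary `θ`-weighted payoff `γ_θ(π, ŝ, t̂; ζ)`. -/
def payA {I J K L : Type*} [Fintype I] [Fintype J] [Fintype K] [Fintype L]
    (θ : ℕ → ℝ) (G : K → L → I → J → ℝ) (π : K × L → ℝ) (ζ : K → ℝ)
    (s : Strat I J K I) (t : Strat I J L J) : ℝ :=
  ∑ k, ∑ l, π (k, l) * ζ k *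
    ∑' m : ℕ, θ m * stagePay (s.1 k) (t.1 l) (G k l) m

/-- The `θ`-weighted payoff `γ_θ(π, ŝ, t̂)`. -/
def pay {I J K L : Type*} [Fintype I] [Fintype J] [Fintype K] [Fintype L]
    (θ : ℕ → ℝ) (G : K → L → I → J → ℝ) (π : K × L → ℝ)
    (s : Strat I J K I) (t : Strat I J L J) : ℝ :=
  payA θ G π (fun _ => 1) s t

/-- Maxmin `v⁻_θ(π)` of the repeated game `𝒢_θ(π)`. -/
def vMinus {I J K L : Type*} [Fintype I] [Fintype J] [Fintype K] [Fintype L]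
    (θ : ℕ → ℝ) (G : K → L → I → J → ℝ) (π : K × L → ℝ) : ℝ :=
  ⨆ s : Strat I J K I, ⨅ t : Strat I J L J, pay θ G π s t

/-- Minmax `v⁺_θ(π)` of the repeated game `𝒢_θ(π)`. -/
def vPlus {I J K L : Type*} [Fintype I] [Fintype J] [Fintype K] [Fintype L]
    (θ : ℕ → ℝ) (G : K → L → I → J → ℝ) (π : K × L → ℝ) : ℝ :=
  ⨅ t : Strat I J L J, ⨆ s : Strat I J K I, pay θ G π s t

/-- Dual payoff `h_θ[x,Q;ζ](p,ŝ,t̂) = γ_θ(p⊗Q, ŝ, t̂; ζ) − ⟨p,x⟩`. -/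
def hDual {I J K L : Type*} [Fintype I] [Fintype J] [Fintype K] [Fintype L]
    (θ : ℕ → ℝ) (G : K → L → I → J → ℝ) (x : K → ℝ) (Q : K → L → ℝ)
    (ζ : K → ℝ) (p : K → ℝ) (s : Strat I J K I) (t : Strat I J L J) : ℝ :=
  payA θ G (fun kl => p kl.1 * Q kl.1 kl.2) ζ s t - ∑ k, p k * x k

/-- Maxmin `w⁻_θ(x,Q;ζ)` of the dual game `𝒟[𝒢_θ](x,Q;ζ)`. -/
def wMinus {I J K L : Type*} [Fintype I] [Fintype J] [Fintype K] [Fintype L]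
    (θ : ℕ → ℝ) (G : K → L → I → J → ℝ) (x : K → ℝ) (Q : K → L → ℝ)
    (ζ : K → ℝ) : ℝ :=
  ⨆ ps : stdSimplex ℝ K × Strat I J K I, ⨅ t : Strat I J L J,
    hDual θ G x Q ζ (ps.1 : K → ℝ) ps.2 t

/-- Minmax `w⁺_θ(x,Q;ζ)` of the dual game `𝒟[𝒢_θ](x,Q;ζ)`. -/
def wPlus {I J K L : Type*} [Fintype I] [Fintype J] [Fintype K] [Fintype L]
    (θ : ℕ → ℝ) (G : K → L → I → J → ℝ) (x : K → ℝ) (Q : K → L → ℝ)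
    (ζ : K → ℝ) : ℝ :=
  ⨅ t : Strat I J L J, ⨆ ps : stdSimplex ℝ K × Strat I J K I,
    hDual θ G x Q ζ (ps.1 : K → ℝ) ps.2 t

end RepeatedGames


noncomputable section Aux

open scoped BigOperators

variable {I J : Type*} [Fintype I] [Fintype J]

/-- Product of the `pr`-marginal probabilities along a history. -/
def prodP {I J A : Type*} (pr : I × J → A) (f : List (I × J) → A → ℝ) :
    List (I × J) → ℝ
  | [] => 1
  | a :: h => f [] (pr a) * prodP pr (fun h' => f (a :: h')) h

lemma probH_eq_prod {I J : Type*} (s : List (I × J) → I → ℝ)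
    (t : List (I × J) → J → ℝ) (h : List (I × J)) :
    probH s t h = prodP Prod.fst s h * prodP Prod.snd t h := by
  induction h generalizing s t with
  | nil => simp [probH, prodP]
  | cons a h ih => simp [probH, prodP, ih]; ring

lemma prodP_nonneg {I J A : Type*} (pr : I × J → A) {f : List (I × J) → A → ℝ}
    (hf : ∀ h a, 0 ≤ f h a) (h : List (I × J)) : 0 ≤ prodP pr f h := by
  induction h generalizing f with
  | nil => simp [prodP]
  | cons a h ih => exact mul_nonneg (hf _ _) (ih fun h a => hf _ _)

lemma prodP_append {I J A : Type*} (pr : I × J → A) (f : List (I × J) → A → ℝ)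
    (h : List (I × J)) (a : I × J) :
    prodP pr f (h ++ [a]) = prodP pr f h * f h (pr a) := by
  induction h generalizing f with
  | nil => simp [prodP]
  | cons b h ih => simp [prodP, ih]; ring

lemma probH_nonneg {s : List (I × J) → I → ℝ} {t : List (I × J) → J → ℝ}
    (hs : ∀ h a, 0 ≤ s h a) (ht : ∀ h a, 0 ≤ t h a) (h : List (I × J)) :
    0 ≤ probH s t h := by
  rw [probH_eq_prod]
  exact mul_nonneg (prodP_nonneg _ hs h) (prodP_nonneg _ ht h)

lemma sum_probH (s : List (I × J) → I → ℝ) (t : List (I × J) → J → ℝ)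
    (hs : ∀ h, s h ∈ stdSimplex ℝ I) (ht : ∀ h, t h ∈ stdSimplex ℝ J) (m : ℕ) :
    ∑ h : Fin m → I × J, probH s t (List.ofFn h) = 1 := by
  induction m generalizing s t with
  | zero =>
      simp [probH, List.ofFn_zero]
  | succ m ih =>
      rw [← (Fin.consEquiv (fun _ : Fin (m + 1) => I × J)).sum_comp]
      rw [Fintype.sum_prod_type]
      have : ∀ (a : I × J) (h : Fin m → I × J),
          probH s t (List.ofFn ((Fin.consEquiv (fun _ : Fin (m + 1) => I × J)) (a, h))) =
            s [] a.1 * t [] a.2 *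
              probH (fun h' => s (a :: h')) (fun h' => t (a :: h')) (List.ofFn h) := by
        intro a h
        rw [List.ofFn_succ]
        simp [Fin.consEquiv, probH, Fin.cons]
      simp only [this]
      have hinner : ∀ a : I × J,
          ∑ h : Fin m → I × J, s [] a.1 * t [] a.2 *
              probH (fun h' => s (a :: h')) (fun h' => t (a :: h')) (List.ofFn h)
            = s [] a.1 * t [] a.2 := by
        intro a
        rw [← Finset.mul_sum, ih _ _ (fun h => hs _) (fun h => ht _), mul_one]
      simp only [hinner]
      rw [Fintype.sum_prod_type]
      rw [← Finset.sum_mul_sum]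
      rw [(hs []).2, (ht []).2, one_mul]

lemma abs_inner_le {s : List (I × J) → I → ℝ} {t : List (I × J) → J → ℝ}
    {g : I → J → ℝ} {C : ℝ}
    (hs : ∀ h, s h ∈ stdSimplex ℝ I) (ht : ∀ h, t h ∈ stdSimplex ℝ J)
    (hg : ∀ i j, |g i j| ≤ C) (h : List (I × J)) :
    |∑ i, ∑ j, s h i * t h j * g i j| ≤ C := by
  calc |∑ i, ∑ j, s h i * t h j * g i j|
      ≤ ∑ i, ∑ j, |s h i * t h j * g i j| := by
        refine (Finset.abs_sum_le_sum_abs _ _).trans ?_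
        exact Finset.sum_le_sum fun i _ => Finset.abs_sum_le_sum_abs _ _
    _ ≤ ∑ i, ∑ j, s h i * t h j * C := by
        refine Finset.sum_le_sum fun i _ => Finset.sum_le_sum fun j _ => ?_
        rw [abs_mul, abs_mul, abs_of_nonneg ((hs h).1 i), abs_of_nonneg ((ht h).1 j)]
        exact mul_le_mul_of_nonneg_left (hg i j)
          (mul_nonneg ((hs h).1 i) ((ht h).1 j))
    _ = C := by
        simp only [← Finset.sum_mul, ← Finset.mul_sum]
        rw [(ht _).2, (hs _).2]
        ring

lemma abs_stagePay_le {s : List (I × J) → I → ℝ} {t : List (I × J) → J → ℝ}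
    {g : I → J → ℝ} {C : ℝ}
    (hs : ∀ h, s h ∈ stdSimplex ℝ I) (ht : ∀ h, t h ∈ stdSimplex ℝ J)
    (hg : ∀ i j, |g i j| ≤ C) (m : ℕ) :
    |stagePay s t g m| ≤ C := by
  unfold stagePay
  calc |∑ h : Fin m → I × J, probH s t (List.ofFn h) *
          ∑ i, ∑ j, s (List.ofFn h) i * t (List.ofFn h) j * g i j|
      ≤ ∑ h : Fin m → I × J, probH s t (List.ofFn h) * C := by
        refine (Finset.abs_sum_le_sum_abs _ _).trans (Finset.sum_le_sum fun h _ => ?_)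
        rw [abs_mul, abs_of_nonneg (probH_nonneg (fun h a => (hs h).1 a)
          (fun h a => (ht h).1 a) _)]
        exact mul_le_mul_of_nonneg_left (abs_inner_le hs ht hg _)
          (probH_nonneg (fun h a => (hs h).1 a) (fun h a => (ht h).1 a) _)
    _ = C := by rw [← Finset.sum_mul, sum_probH s t hs ht m, one_mul]

lemma summable_stage {θ : ℕ → ℝ} (hθ0 : ∀ m, 0 ≤ θ m) (hθ1 : HasSum θ 1)
    {s : List (I × J) → I → ℝ} {t : List (I × J) → J → ℝ} {g : I → J → ℝ} {C : ℝ}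
    (hs : ∀ h, s h ∈ stdSimplex ℝ I) (ht : ∀ h, t h ∈ stdSimplex ℝ J)
    (hg : ∀ i j, |g i j| ≤ C) :
    Summable (fun m => θ m * stagePay s t g m) := by
  refine Summable.of_norm_bounded (hθ1.summable.mul_right C) fun m => ?_
  rw [Real.norm_eq_abs, abs_mul, abs_of_nonneg (hθ0 m)]
  exact mul_le_mul_of_nonneg_left (abs_stagePay_le hs ht hg m) (hθ0 m)

lemma abs_tsum_stage_le {θ : ℕ → ℝ} (hθ0 : ∀ m, 0 ≤ θ m) (hθ1 : HasSum θ 1)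
    {s : List (I × J) → I → ℝ} {t : List (I × J) → J → ℝ} {g : I → J → ℝ} {C : ℝ}
    (hs : ∀ h, s h ∈ stdSimplex ℝ I) (ht : ∀ h, t h ∈ stdSimplex ℝ J)
    (hg : ∀ i j, |g i j| ≤ C) :
    |∑' m, θ m * stagePay s t g m| ≤ C := by
  have hsum := summable_stage hθ0 hθ1 hs ht hg
  have habs : Summable (fun m => |θ m * stagePay s t g m|) := hsum.abs
  calc |∑' m, θ m * stagePay s t g m| ≤ ∑' m, |θ m * stagePay s t g m| := by
        have := norm_tsum_le_tsum_norm (f := fun m => θ m * stagePay s t g m)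
          (by simpa [Real.norm_eq_abs, abs_mul] using habs)
        simpa [Real.norm_eq_abs, abs_mul] using this
    _ ≤ ∑' m, θ m * C := by
        refine Summable.tsum_le_tsum (fun m => ?_) habs (hθ1.summable.mul_right C)
        rw [abs_mul, abs_of_nonneg (hθ0 m)]
        exact mul_le_mul_of_nonneg_left (abs_stagePay_le hs ht hg m) (hθ0 m)
    _ = C := by rw [tsum_mul_right, hθ1.tsum_eq, one_mul]

/-- Single-player behavioral strategies. -/
def SStrat (I J A : Type*) [Fintype A] : Type _ :=
  {f : List (I × J) → A → ℝ // ∀ h, f h ∈ stdSimplex ℝ A}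

instance {I J A : Type*} [Fintype A] [Nonempty A] : Nonempty (SStrat I J A) := by
  refine ⟨⟨fun _ _ => (Fintype.card A : ℝ)⁻¹, fun h => ⟨fun a => by positivity, ?_⟩⟩⟩
  have hA : (Fintype.card A : ℝ) ≠ 0 := by exact_mod_cast Fintype.card_ne_zero
  simp [Finset.sum_const, Finset.card_univ, nsmul_eq_mul, mul_inv_cancel₀ hA]

variable {K L : Type*} [Fintype K] [Fintype L]

/-- Payoff to player 1 of type `k` against `t`, using one-player strategy `σ`. -/
def payK (θ : ℕ → ℝ) (G : K → L → I → J → ℝ) (Q : K → L → ℝ) (k : K)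
    (σ : SStrat I J I) (t : Strat I J L J) : ℝ :=
  ∑ l, Q k l * ∑' m, θ m * stagePay σ.1 (t.1 l) (G k l) m

/-- Best-reply value of player 1 of type `k` against `t`. -/
def Vk [Nonempty I] (θ : ℕ → ℝ) (G : K → L → I → J → ℝ) (Q : K → L → ℝ) (k : K)
    (t : Strat I J L J) : ℝ :=
  ⨆ σ : SStrat I J I, payK θ G Q k σ t

section Mix

variable [Nonempty J]

/-- Kuhn mixture of two behavioral strategies of player 2. -/
def mixT (lam mu : ℝ) (t1 t2 : List (I × J) → J → ℝ) (h : List (I × J)) (j : J) : ℝ :=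
  if lam * prodP Prod.snd t1 h + mu * prodP Prod.snd t2 h = 0 then (Fintype.card J : ℝ)⁻¹
  else (lam * prodP Prod.snd t1 h * t1 h j + mu * prodP Prod.snd t2 h * t2 h j) /
       (lam * prodP Prod.snd t1 h + mu * prodP Prod.snd t2 h)

variable {lam mu : ℝ} {t1 t2 : List (I × J) → J → ℝ}

lemma mixT_mem (hlam : 0 ≤ lam) (hmu : 0 ≤ mu)
    (ht1 : ∀ h, t1 h ∈ stdSimplex ℝ J) (ht2 : ∀ h, t2 h ∈ stdSimplex ℝ J)
    (h : List (I × J)) : mixT lam mu t1 t2 h ∈ stdSimplex ℝ J := by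
  have h1 := prodP_nonneg Prod.snd (fun h a => (ht1 h).1 a) h
  have h2 := prodP_nonneg Prod.snd (fun h a => (ht2 h).1 a) h
  unfold mixT
  by_cases hD : lam * prodP Prod.snd t1 h + mu * prodP Prod.snd t2 h = 0
  · simp only [if_pos hD]
    constructor
    · intro j; positivity
    · have hJ : (Fintype.card J : ℝ) ≠ 0 := by exact_mod_cast Fintype.card_ne_zero
      simp [Finset.sum_const, Finset.card_univ, nsmul_eq_mul, mul_inv_cancel₀ hJ]
  · have hDpos : 0 < lam * prodP Prod.snd t1 h + mu * prodP Prod.snd t2 h :=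
      lt_of_le_of_ne (by positivity) (Ne.symm hD)
    simp only [if_neg hD]
    constructor
    · intro j
      have ha := (ht1 h).1 j
      have hb := (ht2 h).1 j
      exact div_nonneg (by positivity) hDpos.le
    · rw [← Finset.sum_div]
      rw [div_eq_one_iff_eq hD]
      rw [Finset.sum_add_distrib, ← Finset.mul_sum, ← Finset.mul_sum,
        (ht1 h).2, (ht2 h).2, mul_one, mul_one]

lemma prodP_mixT (hlam : 0 ≤ lam) (hmu : 0 ≤ mu) (hlm : lam + mu = 1)
    (ht1 : ∀ h, t1 h ∈ stdSimplex ℝ J) (ht2 : ∀ h, t2 h ∈ stdSimplex ℝ J)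
    (h : List (I × J)) :
    prodP Prod.snd (mixT lam mu t1 t2) h =
      lam * prodP Prod.snd t1 h + mu * prodP Prod.snd t2 h := by
  induction h using List.reverseRecOn with
  | nil => simp [prodP, hlm]
  | append_singleton h a ih =>
      rw [prodP_append, prodP_append, prodP_append, ih]
      have h1 := prodP_nonneg Prod.snd (fun h a => (ht1 h).1 a) h
      have h2 := prodP_nonneg Prod.snd (fun h a => (ht2 h).1 a) h
      unfold mixT
      by_cases hD : lam * prodP Prod.snd t1 h + mu * prodP Prod.snd t2 h = 0
      · have e1 : lam * prodP Prod.snd t1 h = 0 := by nlinarith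
        have e2 : mu * prodP Prod.snd t2 h = 0 := by nlinarith
        rw [if_pos hD, hD, zero_mul]
        have : lam * (prodP Prod.snd t1 h * t1 h a.2) +
            mu * (prodP Prod.snd t2 h * t2 h a.2) =
            (lam * prodP Prod.snd t1 h) * t1 h a.2 +
            (mu * prodP Prod.snd t2 h) * t2 h a.2 := by ring
        rw [this, e1, e2]
        ring
      · rw [if_neg hD, mul_div_cancel₀ _ hD]
        ring

lemma mixT_key (hlam : 0 ≤ lam) (hmu : 0 ≤ mu) (hlm : lam + mu = 1)
    (ht1 : ∀ h, t1 h ∈ stdSimplex ℝ J) (ht2 : ∀ h, t2 h ∈ stdSimplex ℝ J)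
    (h : List (I × J)) (j : J) :
    prodP Prod.snd (mixT lam mu t1 t2) h * mixT lam mu t1 t2 h j =
      lam * (prodP Prod.snd t1 h * t1 h j) + mu * (prodP Prod.snd t2 h * t2 h j) := by
  rw [prodP_mixT hlam hmu hlm ht1 ht2]
  have h1 := prodP_nonneg Prod.snd (fun h a => (ht1 h).1 a) h
  have h2 := prodP_nonneg Prod.snd (fun h a => (ht2 h).1 a) h
  unfold mixT
  by_cases hD : lam * prodP Prod.snd t1 h + mu * prodP Prod.snd t2 h = 0
  · have e1 : lam * prodP Prod.snd t1 h = 0 := by nlinarith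
    have e2 : mu * prodP Prod.snd t2 h = 0 := by nlinarith
    rw [if_pos hD, hD, zero_mul]
    have : lam * (prodP Prod.snd t1 h * t1 h j) +
        mu * (prodP Prod.snd t2 h * t2 h j) =
        (lam * prodP Prod.snd t1 h) * t1 h j +
        (mu * prodP Prod.snd t2 h) * t2 h j := by ring
    rw [this, e1, e2]
    ring
  · rw [if_neg hD, mul_div_cancel₀ _ hD]
    ring

lemma stagePay_mixT {σ : List (I × J) → I → ℝ} (hσ : ∀ h, σ h ∈ stdSimplex ℝ I)
    (hlam : 0 ≤ lam) (hmu : 0 ≤ mu) (hlm : lam + mu = 1)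
    (ht1 : ∀ h, t1 h ∈ stdSimplex ℝ J) (ht2 : ∀ h, t2 h ∈ stdSimplex ℝ J)
    (g : I → J → ℝ) (m : ℕ) :
    stagePay σ (mixT lam mu t1 t2) g m =
      lam * stagePay σ t1 g m + mu * stagePay σ t2 g m := by
  have hH : ∀ H : List (I × J),
      probH σ (mixT lam mu t1 t2) H *
          (∑ i, ∑ j, σ H i * mixT lam mu t1 t2 H j * g i j) =
        lam * (probH σ t1 H * ∑ i, ∑ j, σ H i * t1 H j * g i j) +
          mu * (probH σ t2 H * ∑ i, ∑ j, σ H i * t2 H j * g i j) := by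
    intro H
    have key := mixT_key hlam hmu hlm ht1 ht2 H
    simp only [probH_eq_prod, Finset.mul_sum]
    rw [← Finset.sum_add_distrib]
    refine Finset.sum_congr rfl fun i _ => ?_
    rw [← Finset.sum_add_distrib]
    refine Finset.sum_congr rfl fun j _ => ?_
    calc prodP Prod.fst σ H * prodP Prod.snd (mixT lam mu t1 t2) H *
          (σ H i * mixT lam mu t1 t2 H j * g i j)
        = (prodP Prod.fst σ H * σ H i * g i j) *
            (prodP Prod.snd (mixT lam mu t1 t2) H * mixT lam mu t1 t2 H j) := by ring
      _ = (prodP Prod.fst σ H * σ H i * g i j) *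
            (lam * (prodP Prod.snd t1 H * t1 H j) +
              mu * (prodP Prod.snd t2 H * t2 H j)) := by rw [key]
      _ = _ := by ring
  unfold stagePay
  rw [Finset.mul_sum, Finset.mul_sum, ← Finset.sum_add_distrib]
  exact Finset.sum_congr rfl fun h _ => hH (List.ofFn h)

end Mix

section Vk

variable [Nonempty I] [Nonempty J] [Nonempty K] [Nonempty L]
variable {θ : ℕ → ℝ} {G : K → L → I → J → ℝ} {Q : K → L → ℝ} {C : ℝ}
variable (hθ0 : ∀ m, 0 ≤ θ m) (hθ1 : HasSum θ 1)
variable (hQ : ∀ k, Q k ∈ stdSimplex ℝ L)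
variable (hG : ∀ k l i j, |G k l i j| ≤ C)

include hθ0 hθ1 hQ hG

lemma abs_payK_le (k : K) (σ : SStrat I J I) (t : Strat I J L J) :
    |payK θ G Q k σ t| ≤ C := by
  unfold payK
  calc |∑ l, Q k l * ∑' m, θ m * stagePay σ.1 (t.1 l) (G k l) m|
      ≤ ∑ l, Q k l * C := by
        refine (Finset.abs_sum_le_sum_abs _ _).trans (Finset.sum_le_sum fun l _ => ?_)
        rw [abs_mul, abs_of_nonneg ((hQ k).1 l)]
        exact mul_le_mul_of_nonneg_left
          (abs_tsum_stage_le hθ0 hθ1 σ.2 (t.2 l) (hG k l)) ((hQ k).1 l)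
    _ = C := by rw [← Finset.sum_mul, (hQ k).2, one_mul]

lemma bddAbove_payK (k : K) (t : Strat I J L J) :
    BddAbove (Set.range fun σ : SStrat I J I => payK θ G Q k σ t) := by
  refine ⟨C, ?_⟩
  rintro _ ⟨σ, rfl⟩
  exact (abs_le.1 (abs_payK_le hθ0 hθ1 hQ hG k σ t)).2

lemma abs_Vk_le (k : K) (t : Strat I J L J) : |Vk θ G Q k t| ≤ C := by
  rw [abs_le]
  constructor
  · exact le_trans (abs_le.1 (abs_payK_le hθ0 hθ1 hQ hG k (Classical.arbitrary _) t)).1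
      (le_ciSup (bddAbove_payK hθ0 hθ1 hQ hG k t) _)
  · exact ciSup_le fun σ => (abs_le.1 (abs_payK_le hθ0 hθ1 hQ hG k σ t)).2

lemma payK_le_Vk (k : K) (σ : SStrat I J I) (t : Strat I J L J) :
    payK θ G Q k σ t ≤ Vk θ G Q k t :=
  le_ciSup (bddAbove_payK hθ0 hθ1 hQ hG k t) σ

omit hθ0 hθ1 hQ hG in
/-- Decomposition of the primal payoff. -/
lemma pay_eq_sum_payK (θ : ℕ → ℝ) (G : K → L → I → J → ℝ) (Q : K → L → ℝ)
    (p' : K → ℝ) (s : Strat I J K I) (t : Strat I J L J) :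
    pay θ G (fun kl => p' kl.1 * Q kl.1 kl.2) s t =
      ∑ k, p' k * payK θ G Q k ⟨s.1 k, s.2 k⟩ t := by
  unfold pay payA payK
  refine Finset.sum_congr rfl fun k _ => ?_
  rw [Finset.mul_sum]
  refine Finset.sum_congr rfl fun l _ => ?_
  ring

lemma pay_le_sum_Vk {p' : K → ℝ} (hp' : p' ∈ stdSimplex ℝ K)
    (s : Strat I J K I) (t : Strat I J L J) :
    pay θ G (fun kl => p' kl.1 * Q kl.1 kl.2) s t ≤ ∑ k, p' k * Vk θ G Q k t := by
  rw [pay_eq_sum_payK]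
  exact Finset.sum_le_sum fun k _ => mul_le_mul_of_nonneg_left
    (payK_le_Vk hθ0 hθ1 hQ hG k _ t) (hp'.1 k)

/-- The full sup-decomposition. -/
lemma ciSup_pay_eq {p' : K → ℝ} (hp' : p' ∈ stdSimplex ℝ K) (t : Strat I J L J) :
    (⨆ s : Strat I J K I, pay θ G (fun kl => p' kl.1 * Q kl.1 kl.2) s t) =
      ∑ k, p' k * Vk θ G Q k t := by
  refine le_antisymm (ciSup_le fun s => pay_le_sum_Vk hθ0 hθ1 hQ hG hp' s t) ?_
  refine le_of_forall_pos_le_add fun ε hε => ?_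
  have hchoice : ∀ k : K, ∃ σ : SStrat I J I,
      Vk θ G Q k t - ε ≤ payK θ G Q k σ t := by
    intro k
    obtain ⟨σ, hσ⟩ := exists_lt_of_lt_ciSup
      (show Vk θ G Q k t - ε < ⨆ σ : SStrat I J I, payK θ G Q k σ t by
        rw [← Vk]; linarith)
    exact ⟨σ, hσ.le⟩
  choose σ hσ using hchoice
  set s : Strat I J K I := ⟨fun k => (σ k).1, fun k => (σ k).2⟩ with hs
  have hb : BddAbove (Set.range fun s : Strat I J K I =>
      pay θ G (fun kl => p' kl.1 * Q kl.1 kl.2) s t) := by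
    refine ⟨∑ k, p' k * Vk θ G Q k t, ?_⟩
    rintro _ ⟨s', rfl⟩
    exact pay_le_sum_Vk hθ0 hθ1 hQ hG hp' s' t
  have h1 : ∑ k, p' k * Vk θ G Q k t ≤ pay θ G (fun kl => p' kl.1 * Q kl.1 kl.2) s t + ε := by
    rw [pay_eq_sum_payK]
    have hle : ∑ k, p' k * Vk θ G Q k t ≤ ∑ k, p' k * (payK θ G Q k ⟨s.1 k, s.2 k⟩ t + ε) := by
      refine Finset.sum_le_sum fun k _ => mul_le_mul_of_nonneg_left ?_ (hp'.1 k)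
      show Vk θ G Q k t ≤ payK θ G Q k (σ k) t + ε
      linarith [hσ k]
    refine hle.trans (le_of_eq ?_)
    simp only [mul_add]
    rw [Finset.sum_add_distrib, ← Finset.sum_mul, hp'.2, one_mul]
  exact h1.trans (add_le_add_left (le_ciSup hb s) ε)

lemma exists_mix_strat (t1 t2 : Strat I J L J) {lam mu : ℝ}
    (hlam : 0 ≤ lam) (hmu : 0 ≤ mu) (hlm : lam + mu = 1) :
    ∃ tm : Strat I J L J, ∀ k,
      Vk θ G Q k tm ≤ lam * Vk θ G Q k t1 + mu * Vk θ G Q k t2 := by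
  set tm : Strat I J L J := ⟨fun l => mixT lam mu (t1.1 l) (t2.1 l),
    fun l h => mixT_mem hlam hmu (t1.2 l) (t2.2 l) h⟩ with htm
  refine ⟨tm, fun k => ?_⟩
  have hpayK : ∀ σ : SStrat I J I,
      payK θ G Q k σ tm =
        lam * payK θ G Q k σ t1 + mu * payK θ G Q k σ t2 := by
    intro σ
    unfold payK
    rw [Finset.mul_sum, Finset.mul_sum, ← Finset.sum_add_distrib]
    refine Finset.sum_congr rfl fun l _ => ?_
    have hst : ∀ m, stagePay σ.1 (mixT lam mu (t1.1 l) (t2.1 l)) (G k l) m =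
        lam * stagePay σ.1 (t1.1 l) (G k l) m + mu * stagePay σ.1 (t2.1 l) (G k l) m :=
      stagePay_mixT σ.2 hlam hmu hlm (t1.2 l) (t2.2 l) (G k l)
    have hts : ∑' m, θ m * stagePay σ.1 (mixT lam mu (t1.1 l) (t2.1 l)) (G k l) m =
        lam * ∑' m, θ m * stagePay σ.1 (t1.1 l) (G k l) m +
          mu * ∑' m, θ m * stagePay σ.1 (t2.1 l) (G k l) m := by
      have he : (fun m => θ m * stagePay σ.1 (mixT lam mu (t1.1 l) (t2.1 l)) (G k l) m) =
          fun m => lam * (θ m * stagePay σ.1 (t1.1 l) (G k l) m) +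
            mu * (θ m * stagePay σ.1 (t2.1 l) (G k l) m) := by
        funext m; rw [hst m]; ring
      rw [he, Summable.tsum_add ((summable_stage hθ0 hθ1 σ.2 (t1.2 l) (hG k l)).mul_left lam)
        ((summable_stage hθ0 hθ1 σ.2 (t2.2 l) (hG k l)).mul_left mu),
        tsum_mul_left, tsum_mul_left]
    rw [hts]
    ring
  refine ciSup_le fun σ => ?_
  rw [hpayK σ]
  exact add_le_add
    (mul_le_mul_of_nonneg_left (payK_le_Vk hθ0 hθ1 hQ hG k σ t1) hlam)
    (mul_le_mul_of_nonneg_left (payK_le_Vk hθ0 hθ1 hQ hG k σ t2) hmu)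

end Vk


end Aux

/-- Abstract minimax bound via separation. -/
theorem sep_lemma {K T : Type*} [Fintype K] [Nonempty K] [Nonempty T]
    (g : T → K → ℝ) (B : ℝ) (hB : ∀ t k, |g t k| ≤ B)
    (hconv : ∀ t1 t2 : T, ∀ lam mu : ℝ, 0 ≤ lam → 0 ≤ mu → lam + mu = 1 →
      ∃ t, ∀ k, g t k ≤ lam * g t1 k + mu * g t2 k)
    (c : ℝ) (hc : ∀ p' ∈ stdSimplex ℝ K, (⨅ t, ∑ k, p' k * g t k) ≤ c) :
    (⨅ t, ⨆ k, g t k) ≤ c := by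
  classical
  by_contra hlt
  push_neg at hlt
  set M : ℝ := ⨅ t, ⨆ k, g t k with hM
  have hbddk : ∀ t : T, BddAbove (Set.range fun k => g t k) :=
    fun t => (Set.finite_range _).bddAbove
  have hsup_ge : ∀ t : T, -B ≤ (⨆ k, g t k) := fun t =>
    le_trans (abs_le.1 (hB t (Classical.arbitrary K))).1 (le_ciSup (hbddk t) _)
  have hbddT : BddBelow (Set.range fun t : T => ⨆ k, g t k) :=
    ⟨-B, by rintro _ ⟨t, rfl⟩; exact hsup_ge t⟩
  set S : Set (K → ℝ) := {y | ∃ t, ∀ k, g t k ≤ y k} with hS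
  set U : Set (K → ℝ) := {y | ∀ k, y k < M} with hU
  have hSconv : Convex ℝ S := by
    rintro y1 ⟨t1, ht1⟩ y2 ⟨t2, ht2⟩ lam mu hlam hmu hlm
    obtain ⟨t, ht⟩ := hconv t1 t2 lam mu hlam hmu hlm
    refine ⟨t, fun k => (ht k).trans ?_⟩
    simp only [Pi.add_apply, Pi.smul_apply, smul_eq_mul]
    exact add_le_add (mul_le_mul_of_nonneg_left (ht1 k) hlam)
      (mul_le_mul_of_nonneg_left (ht2 k) hmu)
  have hUconv : Convex ℝ U := by
    rintro y1 h1 y2 h2 lam mu hlam hmu hlm k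
    have h1k := h1 k
    have h2k := h2 k
    simp only [Pi.add_apply, Pi.smul_apply, smul_eq_mul]
    rcases eq_or_lt_of_le hlam with h | h
    · have hmu1 : mu = 1 := by linarith
      rw [← h, hmu1]; simpa using h2k
    · have hmM : lam * M + mu * M = M := by rw [← add_mul, hlm, one_mul]
      linarith [mul_le_mul_of_nonneg_left h2k.le hmu, mul_lt_mul_of_pos_left h1k h]
  have hUopen : IsOpen U := by
    have : U = ⋂ k, (fun y : K → ℝ => y k) ⁻¹' Set.Iio M := by
      ext y; simp [hU, Set.mem_iInter]
    rw [this]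
    exact isOpen_iInter_of_finite fun k => (continuous_apply k).isOpen_preimage _ isOpen_Iio
  have hdisj : Disjoint U S := by
    rw [Set.disjoint_left]
    rintro y hyU ⟨t, hyt⟩
    obtain ⟨k0, hk0⟩ := Finite.exists_max fun k => g t k
    have h1 : M ≤ g t k0 := (ciInf_le hbddT t).trans (ciSup_le hk0)
    exact absurd ((hyt k0).trans_lt (hyU k0)) (not_lt.2 h1)
  obtain ⟨f, u, hfU, hfS⟩ := geometric_hahn_banach_open hUconv hUopen hSconv hdisj
  set cv : K → ℝ := fun k => f (Pi.single k 1) with hcv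
  have hf_eq : ∀ y : K → ℝ, f y = ∑ k, y k * cv k := by
    intro y
    conv_lhs => rw [pi_eq_sum_univ y]
    rw [map_sum]
    refine Finset.sum_congr rfl fun k _ => ?_
    rw [map_smul, smul_eq_mul]
    congr 1
    rw [hcv]
    congr 1
    funext j
    simp [Pi.single_apply, eq_comm]
  have hBS : (fun _ : K => B) ∈ S := ⟨Classical.arbitrary T,
    fun k => (abs_le.1 (hB _ k)).2⟩
  have hUne : (fun _ : K => M - 1) ∈ U := by
    intro k; show M - 1 < M; linarith
  have hcv0 : ∀ k, 0 ≤ cv k := by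
    intro k
    by_contra hneg
    push_neg at hneg
    obtain ⟨n, hn⟩ := exists_nat_gt ((u - f (fun _ => B)) / cv k)
    set b : K → ℝ := (fun _ => B) + (n : ℝ) • (Pi.single k 1 : K → ℝ) with hb
    have hmem : b ∈ S := by
      refine ⟨Classical.arbitrary T, fun k' => ?_⟩
      have h2 := (abs_le.1 (hB (Classical.arbitrary T) k')).2
      have hps : (0:ℝ) ≤ ((n : ℝ) • (Pi.single k 1 : K → ℝ)) k' := by
        rcases eq_or_ne k' k with rfl | hne
        · simp
        · simp [Pi.single_eq_of_ne hne]
      calc g _ k' ≤ B := h2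
        _ ≤ b k' := by rw [hb]; simp only [Pi.add_apply]; linarith
    have hub := hfS _ hmem
    have hfb : f b = f (fun _ => B) + (n:ℝ) * cv k := by
      rw [hb, map_add, map_smul, smul_eq_mul]
    rw [hfb] at hub
    rw [div_lt_iff_of_neg hneg] at hn
    linarith
  have hcvsum : 0 < ∑ k, cv k := by
    rcases (Finset.sum_nonneg fun k _ => hcv0 k).lt_or_eq with h | h
    · exact h
    have hall : ∀ k, cv k = 0 := fun k =>
      (Finset.sum_eq_zero_iff_of_nonneg fun k _ => hcv0 k).1 h.symm k (Finset.mem_univ k)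
    have h1 := hfU _ hUne
    have h2 := hfS _ hBS
    rw [hf_eq] at h1 h2
    simp only [hall, mul_zero, Finset.sum_const_zero] at h1 h2
    linarith
  have hMs : M * (∑ k, cv k) ≤ u := by
    by_contra hcon
    push_neg at hcon
    set η := (M * (∑ k, cv k) - u) / (∑ k, cv k) with hη
    have hη0 : 0 < η := div_pos (by linarith) hcvsum
    have hmem : (fun _ : K => M - η) ∈ U := by
      intro k; show M - η < M; linarith
    have h5 := hfU _ hmem
    rw [hf_eq] at h5
    have h6 : (M - η) * (∑ k, cv k) < u := by
      rw [Finset.mul_sum]; exact h5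
    have h7 : η * (∑ k, cv k) = M * (∑ k, cv k) - u := by
      rw [hη, div_mul_cancel₀ _ hcvsum.ne']
    rw [sub_mul] at h6
    linarith
  set p' : K → ℝ := fun k => cv k / ∑ k', cv k' with hp'
  have hp'mem : p' ∈ stdSimplex ℝ K := by
    constructor
    · exact fun k => div_nonneg (hcv0 k) hcvsum.le
    · rw [← Finset.sum_div, div_self hcvsum.ne']
  have hlow : ∀ t : T, M ≤ ∑ k, p' k * g t k := by
    intro t
    have hgS : g t ∈ S := ⟨t, fun k => le_rfl⟩
    have h8 := hfS _ hgS
    rw [hf_eq] at h8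
    have h1 : u / (∑ k, cv k) ≤ ∑ k, p' k * g t k := by
      rw [div_le_iff₀ hcvsum]
      calc u ≤ ∑ k, g t k * cv k := h8
        _ = (∑ k, p' k * g t k) * ∑ k, cv k := by
            rw [Finset.sum_mul]
            refine Finset.sum_congr rfl fun k _ => ?_
            rw [hp']
            field_simp
    have h7 : M ≤ u / (∑ k, cv k) := (le_div_iff₀ hcvsum).2 hMs
    exact h7.trans h1
  have hfin : M ≤ ⨅ t, ∑ k, p' k * g t k := le_ciInf hlow
  exact absurd (hfin.trans (hc p' hp'mem)) (not_le.2 hlt)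

/-- let `π = p ⊗ Q`, let `x` be a supergradient at `p` of
`p' ↦ v_θ(p'⊗Q)` (the value of `𝒢_θ(p'⊗Q)`, here its minmax `vPlus`, extended
by `−∞` outside `Δ(K)` so the supergradient inequality need only be tested on
`Δ(K)`), and let `t̂ε` be an `ε`-optimal strategy of player 2 in the dual game
`𝒟[𝒢_θ](x,Q;𝟏)`.  Then `t̂ε` is `ε`-optimal for player 2 in `𝒢_θ(π)`:
`sup_ŝ γ_θ(π,ŝ,t̂ε) ≤ v_θ(π) + ε`. -/
theorem stmt_19
    {K L I J : Type*} [Fintype K] [Fintype L] [Fintype I] [Fintype J]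
    [Nonempty K] [Nonempty L] [Nonempty I] [Nonempty J]
    (G : K → L → I → J → ℝ)
    (θ : ℕ → ℝ) (hθ0 : ∀ m, 0 ≤ θ m) (hθ1 : HasSum θ 1)
    (p : K → ℝ) (hp : p ∈ stdSimplex ℝ K)
    (Q : K → L → ℝ) (hQ : ∀ k, Q k ∈ stdSimplex ℝ L)
    (π : K × L → ℝ) (hπ : ∀ k l, π (k, l) = p k * Q k l)
    (x : K → ℝ)
    (hx : ∀ p' ∈ stdSimplex ℝ K,
      vPlus (I := I) (J := J) θ G (fun kl => p' kl.1 * Q kl.1 kl.2) ≤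
        vPlus (I := I) (J := J) θ G (fun kl => p kl.1 * Q kl.1 kl.2) +
          ∑ k, x k * (p' k - p k))
    (ε : ℝ) (hε : 0 ≤ ε)
    (tε : Strat I J L J)
    (htε : (⨆ ps : stdSimplex ℝ K × Strat I J K I,
        hDual θ G x Q (fun _ => 1) (ps.1 : K → ℝ) ps.2 tε) ≤
      wPlus (I := I) (J := J) θ G x Q (fun _ => 1) + ε) :
    (⨆ s : Strat I J K I, pay θ G π s tε) ≤ vPlus θ G π + ε := by
  classical
  haveI : Nonempty (stdSimplex ℝ K) := ⟨⟨p, hp⟩⟩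
  -- rewrite π
  have hπ'' : π = fun kl => p kl.1 * Q kl.1 kl.2 := by
    funext kl; exact hπ kl.1 kl.2
  rw [hπ'']
  rw [hπ''] at *
  -- the uniform bound on payoffs
  set C : ℝ := ∑ k, ∑ l, ∑ i, ∑ j, |G k l i j| with hCdef
  have hG : ∀ k l i j, |G k l i j| ≤ C := by
    intro k l i j
    have h4 : |G k l i j| ≤ ∑ j', |G k l i j'| :=
      Finset.single_le_sum (f := fun j' => |G k l i j'|)
        (fun _ _ => abs_nonneg _) (Finset.mem_univ j)
    have h3 : (∑ j', |G k l i j'|) ≤ ∑ i', ∑ j', |G k l i' j'| :=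
      Finset.single_le_sum (f := fun i' => ∑ j', |G k l i' j'|)
        (fun _ _ => Finset.sum_nonneg fun _ _ => abs_nonneg _) (Finset.mem_univ i)
    have h2 : (∑ i', ∑ j', |G k l i' j'|) ≤ ∑ l', ∑ i', ∑ j', |G k l' i' j'| :=
      Finset.single_le_sum (f := fun l' => ∑ i', ∑ j', |G k l' i' j'|)
        (fun _ _ => Finset.sum_nonneg fun _ _ => Finset.sum_nonneg fun _ _ => abs_nonneg _)
        (Finset.mem_univ l)
    have h1 : (∑ l', ∑ i', ∑ j', |G k l' i' j'|) ≤ C :=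
      Finset.single_le_sum (f := fun k' => ∑ l', ∑ i', ∑ j', |G k' l' i' j'|)
        (fun _ _ => Finset.sum_nonneg fun _ _ => Finset.sum_nonneg fun _ _ =>
          Finset.sum_nonneg fun _ _ => abs_nonneg _) (Finset.mem_univ k)
    linarith
  set X : ℝ := ∑ k, |x k| with hXdef
  have hxX : ∀ k, |x k| ≤ X := by
    intro k
    rw [hXdef]
    exact Finset.single_le_sum (f := fun k' => |x k'|)
      (fun _ _ => abs_nonneg _) (Finset.mem_univ k)
  have hpx : ∀ p' : K → ℝ, p' ∈ stdSimplex ℝ K → |∑ k, p' k * x k| ≤ X := by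
    intro p' hp'
    calc |∑ k, p' k * x k| ≤ ∑ k, |p' k * x k| := Finset.abs_sum_le_sum_abs _ _
      _ ≤ ∑ k, |x k| := by
          refine Finset.sum_le_sum fun k _ => ?_
          rw [abs_mul, abs_of_nonneg (hp'.1 k)]
          have hle : p' k ≤ 1 := by
            have := Finset.single_le_sum (fun k _ => hp'.1 k) (Finset.mem_univ k)
            rw [hp'.2] at this; exact this
          exact mul_le_of_le_one_left (abs_nonneg _) hle
  -- the reduced game
  set g : Strat I J L J → K → ℝ := fun t k => Vk θ G Q k t - x k with hg
  have hBg : ∀ (t : Strat I J L J) (k : K), |g t k| ≤ C + X := by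
    intro t k
    have h1 := abs_Vk_le hθ0 hθ1 hQ hG k t
    have h2 := hxX k
    simp only [hg]
    rw [sub_eq_add_neg]
    refine (abs_add_le _ _).trans ?_
    rw [abs_neg]
    linarith
  -- convexlikeness via Kuhn mixing
  have hconv : ∀ t1 t2 : Strat I J L J, ∀ lam mu : ℝ, 0 ≤ lam → 0 ≤ mu → lam + mu = 1 →
      ∃ t, ∀ k, g t k ≤ lam * g t1 k + mu * g t2 k := by
    intro t1 t2 lam mu hlam hmu hlm
    obtain ⟨tm, htm⟩ := exists_mix_strat hθ0 hθ1 hQ hG t1 t2 hlam hmu hlm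
    refine ⟨tm, fun k => ?_⟩
    have hgsum : lam * g t1 k + mu * g t2 k =
        lam * Vk θ G Q k t1 + mu * Vk θ G Q k t2 - x k := by
      simp only [hg]
      have : lam * (Vk θ G Q k t1 - x k) + mu * (Vk θ G Q k t2 - x k) =
          lam * Vk θ G Q k t1 + mu * Vk θ G Q k t2 - (lam + mu) * x k := by ring
      rw [this, hlm, one_mul]
    rw [hgsum]
    have := htm k
    simp only [hg]
    linarith
  -- boundedness of hDual
  have hDb : ∀ (ps : stdSimplex ℝ K × Strat I J K I) (t : Strat I J L J),
      |hDual θ G x Q (fun _ => 1) (ps.1 : K → ℝ) ps.2 t| ≤ C + X := by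
    intro ps t
    have h1 : hDual θ G x Q (fun _ => 1) (ps.1 : K → ℝ) ps.2 t =
        pay θ G (fun kl => (ps.1 : K → ℝ) kl.1 * Q kl.1 kl.2) ps.2 t -
          ∑ k, (ps.1 : K → ℝ) k * x k := rfl
    rw [h1, pay_eq_sum_payK]
    have h2 : |∑ k, (ps.1 : K → ℝ) k * payK θ G Q k ⟨ps.2.1 k, ps.2.2 k⟩ t| ≤ C := by
      calc |∑ k, (ps.1 : K → ℝ) k * payK θ G Q k ⟨ps.2.1 k, ps.2.2 k⟩ t|
          ≤ ∑ k, |(ps.1 : K → ℝ) k * payK θ G Q k ⟨ps.2.1 k, ps.2.2 k⟩ t| :=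
            Finset.abs_sum_le_sum_abs _ _
        _ ≤ ∑ k, (ps.1 : K → ℝ) k * C := by
            refine Finset.sum_le_sum fun k _ => ?_
            rw [abs_mul, abs_of_nonneg (show 0 ≤ (ps.1 : K → ℝ) k from ps.1.2.1 k)]
            exact mul_le_mul_of_nonneg_left
              (abs_payK_le hθ0 hθ1 hQ hG k _ t) (ps.1.2.1 k)
        _ = C := by rw [← Finset.sum_mul, show ∑ k, (ps.1 : K → ℝ) k = 1 from ps.1.2.2, one_mul]
    have h3 := hpx _ ps.1.2
    rw [sub_eq_add_neg]
    refine (abs_add_le _ _).trans ?_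
    rw [abs_neg]
    exact add_le_add h2 h3
  have hbddD : ∀ t : Strat I J L J, BddAbove (Set.range fun ps : stdSimplex ℝ K × Strat I J K I =>
      hDual θ G x Q (fun _ => 1) (ps.1 : K → ℝ) ps.2 t) := by
    intro t
    exact ⟨C + X, by rintro _ ⟨ps, rfl⟩; exact (abs_le.1 (hDb ps t)).2⟩
  -- step 1: primal sup against tε is controlled by dual sup
  have hmain : (⨆ s : Strat I J K I, pay θ G (fun kl => p kl.1 * Q kl.1 kl.2) s tε) ≤
      (⨆ ps : stdSimplex ℝ K × Strat I J K I,
        hDual θ G x Q (fun _ => 1) (ps.1 : K → ℝ) ps.2 tε) + ∑ k, p k * x k := by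
    refine ciSup_le fun s => ?_
    have h1 : pay θ G (fun kl => p kl.1 * Q kl.1 kl.2) s tε =
        hDual θ G x Q (fun _ => 1) p s tε + ∑ k, p k * x k := by
      unfold hDual pay
      ring
    rw [h1]
    exact add_le_add_left
      (le_ciSup (hbddD tε) (⟨⟨p, hp⟩, s⟩ : stdSimplex ℝ K × Strat I J K I)) _
  -- step 2: wPlus is at most the reduced minmax
  have hw : wPlus (I := I) (J := J) θ G x Q (fun _ => 1) ≤ ⨅ t : Strat I J L J, ⨆ k, g t k := by
    unfold wPlus
    have hbb : BddBelow (Set.range fun t : Strat I J L J =>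
        ⨆ ps : stdSimplex ℝ K × Strat I J K I,
          hDual θ G x Q (fun _ => 1) (ps.1 : K → ℝ) ps.2 t) := by
      refine ⟨-(C + X), ?_⟩
      rintro _ ⟨t, rfl⟩
      refine le_trans ?_ (le_ciSup (hbddD t)
        (⟨⟨p, hp⟩, Classical.arbitrary _⟩ : stdSimplex ℝ K × Strat I J K I))
      exact (abs_le.1 (hDb _ t)).1
    refine ciInf_mono hbb fun t => ?_
    refine ciSup_le fun ps => ?_
    have h1 : hDual θ G x Q (fun _ => 1) (ps.1 : K → ℝ) ps.2 t =
        pay θ G (fun kl => (ps.1 : K → ℝ) kl.1 * Q kl.1 kl.2) ps.2 t -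
          ∑ k, (ps.1 : K → ℝ) k * x k := rfl
    have h2 := pay_le_sum_Vk hθ0 hθ1 hQ hG (show (ps.1 : K → ℝ) ∈ stdSimplex ℝ K from ps.1.2) ps.2 t
    have hbk : BddAbove (Set.range fun k => g t k) := (Set.finite_range _).bddAbove
    have h3 : ∑ k, (ps.1 : K → ℝ) k * g t k ≤ ⨆ k, g t k := by
      calc ∑ k, (ps.1 : K → ℝ) k * g t k ≤ ∑ k, (ps.1 : K → ℝ) k * (⨆ k', g t k') :=
            Finset.sum_le_sum fun k _ =>
              mul_le_mul_of_nonneg_left (le_ciSup hbk k) (ps.1.2.1 k)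
        _ = ⨆ k', g t k' := by rw [← Finset.sum_mul, show ∑ k, (ps.1 : K → ℝ) k = 1 from ps.1.2.2, one_mul]
    have h4 : ∑ k, (ps.1 : K → ℝ) k * g t k =
        ∑ k, (ps.1 : K → ℝ) k * Vk θ G Q k t - ∑ k, (ps.1 : K → ℝ) k * x k := by
      simp only [hg]
      rw [← Finset.sum_sub_distrib]
      exact Finset.sum_congr rfl fun k _ => by ring
    rw [h1]
    linarith
  -- step 3: the separation bound on the reduced minmax
  have hsep : (⨅ t : Strat I J L J, ⨆ k, g t k) ≤
      vPlus θ G (fun kl => p kl.1 * Q kl.1 kl.2) - ∑ k, p k * x k := by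
    refine sep_lemma g (C + X) hBg hconv _ ?_
    intro p' hp'
    -- primal value at p'
    have h1 : vPlus (I := I) (J := J) θ G (fun kl => p' kl.1 * Q kl.1 kl.2) =
        ⨅ t : Strat I J L J, ∑ k, p' k * Vk θ G Q k t := by
      unfold vPlus
      exact iInf_congr fun t => ciSup_pay_eq hθ0 hθ1 hQ hG hp' t
    have hbddg : BddBelow (Set.range fun t : Strat I J L J => ∑ k, p' k * g t k) := by
      refine ⟨-(C + X), ?_⟩
      rintro _ ⟨t, rfl⟩
      calc -(C + X) = ∑ k, p' k * (-(C + X)) := by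
            rw [← Finset.sum_mul, hp'.2, one_mul]
        _ ≤ ∑ k, p' k * g t k := Finset.sum_le_sum fun k _ =>
            mul_le_mul_of_nonneg_left (abs_le.1 (hBg t k)).1 (hp'.1 k)
    have h2 : (⨅ t : Strat I J L J, ∑ k, p' k * g t k) + ∑ k, p' k * x k ≤
        ⨅ t : Strat I J L J, ∑ k, p' k * Vk θ G Q k t := by
      refine le_ciInf fun t => ?_
      have h3 : (⨅ t : Strat I J L J, ∑ k, p' k * g t k) ≤ ∑ k, p' k * g t k :=
        ciInf_le hbddg t
      have h4 : ∑ k, p' k * g t k =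
          ∑ k, p' k * Vk θ G Q k t - ∑ k, p' k * x k := by
        simp only [hg]
        rw [← Finset.sum_sub_distrib]
        exact Finset.sum_congr rfl fun k _ => by ring
      linarith
    have h5 := hx p' hp'
    rw [h1] at h5
    have h6 : ∑ k, x k * (p' k - p k) = ∑ k, p' k * x k - ∑ k, p k * x k := by
      rw [← Finset.sum_sub_distrib]
      exact Finset.sum_congr rfl fun k _ => by ring
    rw [h6] at h5
    linarith
  linarith [htε]
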